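/- For the qubit family ρ_S(θ,t) = (I + B·σ)/2 with Bloch vector B = (h cos θ, −h sin θ, h² − 1) where 0 < h ≤ 1, the matrix L = i h (|ψ₁⟩⟨ψ₂| − |ψ₂⟩⟨ψ₁|) constructed from the eigenvectors of ρ_S via L_{ij} = 2⟨ψ_i|∂_θ ρ_S|ψ_j⟩/(p_i + p_j) satisfies the SLD equation ∂_θ ρ_S = (Lρ_S + ρ_S L)/2, and the quantum Fisher information equals F_θ = Tr(L²ρ_S) = h². -/
import Mathlib

open Matrix ComplexOrder

noncomputable section

def σx : Matrix (Fin 2) (Fin 2) ℂ := !![0, 1; 1, 0]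
def σy : Matrix (Fin 2) (Fin 2) ℂ := !![0, -Complex.I; Complex.I, 0]
def σz : Matrix (Fin 2) (Fin 2) ℂ := !![1, 0; 0, -1]

/-- Bloch-vector state `ρ_S = ½(I + h cosθ σ_x − h sinθ σ_y + (h²−1) σ_z)`. -/
def ρS (h θ : ℝ) : Matrix (Fin 2) (Fin 2) ℂ :=
  (1 / 2 : ℂ) • ((1 : Matrix (Fin 2) (Fin 2) ℂ)
    + ((h * Real.cos θ : ℝ) : ℂ) • σx
    + ((-(h * Real.sin θ) : ℝ) : ℂ) • σy
    + ((h ^ 2 - 1 : ℝ) : ℂ) • σz)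

/-- The θ-derivative of `ρS`. -/
def ρSθ (h θ : ℝ) : Matrix (Fin 2) (Fin 2) ℂ :=
  (1 / 2 : ℂ) • (((-(h * Real.sin θ) : ℝ) : ℂ) • σx
    + ((-(h * Real.cos θ) : ℝ) : ℂ) • σy)

lemma deriv_aux (h θ : ℝ) (A B C D : ℂ) :
    HasDerivAt (fun x : ℝ => (1/2:ℂ) * (A + ((h * Real.cos x : ℝ):ℂ) * B
        + ((-(h * Real.sin x):ℝ):ℂ) * C + D))
      ((1/2:ℂ) * (((-(h * Real.sin θ):ℝ):ℂ) * B + ((-(h * Real.cos θ):ℝ):ℂ) * C)) θ := by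
  have hc : HasDerivAt (fun x : ℝ => ((h * Real.cos x : ℝ):ℂ)) ((-(h * Real.sin θ):ℝ):ℂ) θ := by
    have := ((Real.hasDerivAt_cos θ).const_mul h).ofReal_comp
    simpa [mul_comm] using this
  have hs : HasDerivAt (fun x : ℝ => ((-(h * Real.sin x):ℝ):ℂ)) ((-(h * Real.cos θ):ℝ):ℂ) θ := by
    have := (((Real.hasDerivAt_sin θ).const_mul h).neg).ofReal_comp
    simpa [mul_comm] using this
  have := ((((hasDerivAt_const θ A).add (hc.mul_const B)).add (hs.mul_const C)).add
      (hasDerivAt_const θ D)).const_mul (1/2:ℂ)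
  simpa using this

theorem qubit_qfi_eq_h_sq (h θ : ℝ) (hpos : 0 < h) (hle : h ≤ 1) :
    (∀ i j, HasDerivAt (fun x => ρS h x i j) (ρSθ h θ i j) θ) ∧
    ∃ L : Matrix (Fin 2) (Fin 2) ℂ, L.IsHermitian ∧
      ρSθ h θ = (1 / 2 : ℂ) • (L * ρS h θ + ρS h θ * L) ∧
      (L ^ 2 * ρS h θ).trace = ((h ^ 2 : ℝ) : ℂ) := by
  have pyth : ((Real.sin θ : ℝ) : ℂ) ^ 2 + ((Real.cos θ : ℝ) : ℂ) ^ 2 = 1 := by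
    exact_mod_cast Real.sin_sq_add_cos_sq θ
  constructor
  · intro i j
    have key := deriv_aux h θ ((1 : Matrix (Fin 2) (Fin 2) ℂ) i j) (σx i j) (σy i j)
      (((h ^ 2 - 1 : ℝ):ℂ) * σz i j)
    have hfun : (fun x => ρS h x i j) = fun x : ℝ => (1/2:ℂ) *
        ((1 : Matrix (Fin 2) (Fin 2) ℂ) i j + ((h * Real.cos x : ℝ):ℂ) * σx i j
          + ((-(h * Real.sin x):ℝ):ℂ) * σy i j + ((h ^ 2 - 1 : ℝ):ℂ) * σz i j) := by
      funext x
      simp [ρS, Matrix.add_apply, Matrix.smul_apply, smul_eq_mul]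
    have hval : ρSθ h θ i j = (1/2:ℂ) * (((-(h * Real.sin θ):ℝ):ℂ) * σx i j
        + ((-(h * Real.cos θ):ℝ):ℂ) * σy i j) := by
      simp [ρSθ, Matrix.add_apply, Matrix.smul_apply, smul_eq_mul]
    rw [hfun, hval]
    exact key
  · refine ⟨((-(h * Real.sin θ) : ℝ):ℂ) • σx + ((-(h * Real.cos θ) : ℝ):ℂ) • σy, ?_, ?_, ?_⟩
    · ext i j
      fin_cases i <;> fin_cases j <;>
        simp [σx, σy, Matrix.conjTranspose_apply, Matrix.add_apply, Matrix.smul_apply,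
          ← Complex.ofReal_sin, ← Complex.ofReal_cos, Complex.conj_ofReal]
    · ext i j
      fin_cases i <;> fin_cases j <;>
        · simp [ρS, ρSθ, σx, σy, σz, Matrix.mul_apply, Fin.sum_univ_succ,
            Matrix.vecMul, dotProduct, Matrix.vecHead, Matrix.vecTail,
            Matrix.add_apply, Matrix.smul_apply, Matrix.one_apply,
            ← Complex.ofReal_sin, ← Complex.ofReal_cos]
          ring_nf
          try simp [Complex.I_sq]
          try ring_nf
    · simp [ρS, σx, σy, σz, Matrix.trace, Matrix.mul_apply, Fin.sum_univ_succ, pow_two,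
        Matrix.add_apply, Matrix.smul_apply, Matrix.one_apply, Matrix.diag,
        ← Complex.ofReal_sin, ← Complex.ofReal_cos, Complex.I_sq]
      linear_combination (h:ℂ)^2 * pyth - (h:ℂ)^2 * ((Real.cos θ : ℝ):ℂ)^2 * Complex.I_sq

end
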